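/- Let K ⊆ ℝ^k be compact and suppose p ∈ ℝ^k has two distinct closest points z₁ ≠ z₂ in K, with the angle θ₀ > 0 between [p, z₁] and [p, z₂]. Then for every δ > 0 with 2δ < 1 and arccos(2·((1-2δ)/(1+2δ))² - 1) < θ₀, and every 0 < r < dist(p, K), the function f = dist(·, K) is not δ-coarsely differentiable on B(p, r). -/

import Mathlib

set_option maxHeartbeats 1000000 in
theorem not_coarse_differentiable_on_medial_axis (k : ℕ)
    (K : Set (EuclideanSpace ℝ (Fin k))) (hKc : IsCompact K) (hK : K.Nonempty)
    (p z₁ z₂ : EuclideanSpace ℝ (Fin k)) (hz₁ : z₁ ∈ K) (hz₂ : z₂ ∈ K)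
    (hne : z₁ ≠ z₂)
    (hd₁ : dist p z₁ = Metric.infDist p K) (hd₂ : dist p z₂ = Metric.infDist p K)
    (hθ₀ : 0 < InnerProductGeometry.angle (z₁ - p) (z₂ - p))
    (δ : ℝ) (hδ : 0 < δ) (hδ1 : 2 * δ < 1)
    (hangle : Real.arccos (2 * ((1 - 2 * δ) / (1 + 2 * δ)) ^ 2 - 1) <
      InnerProductGeometry.angle (z₁ - p) (z₂ - p))
    (r : ℝ) (hr : 0 < r) (hrd : r < Metric.infDist p K) :
    ¬ ∃ lam : EuclideanSpace ℝ (Fin k) →ᵃ[ℝ] ℝ,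
      ∀ q ∈ Metric.closedBall p r, |Metric.infDist q K - lam q| ≤ δ * r := by
  rintro ⟨lam, hlam⟩
  set d := Metric.infDist p K with hd
  have hd0 : 0 < d := lt_trans hr hrd
  have hdne : d ≠ 0 := ne_of_gt hd0
  have hz₁p : ‖z₁ - p‖ = d := by rw [← dist_eq_norm, dist_comm]; exact hd₁
  have hz₂p : ‖z₂ - p‖ = d := by rw [← dist_eq_norm, dist_comm]; exact hd₂
  set u₁ : EuclideanSpace ℝ (Fin k) := d⁻¹ • (z₁ - p) with hu₁def
  set u₂ : EuclideanSpace ℝ (Fin k) := d⁻¹ • (z₂ - p) with hu₂def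
  have hu₁ : ‖u₁‖ = 1 := by
    rw [hu₁def, norm_smul, hz₁p, norm_inv, Real.norm_eq_abs, abs_of_pos hd0]
    field_simp
  have hu₂ : ‖u₂‖ = 1 := by
    rw [hu₂def, norm_smul, hz₂p, norm_inv, Real.norm_eq_abs, abs_of_pos hd0]
    field_simp
  set L := lam.linear with hL
  -- affine map difference formula
  have hmap : ∀ v : EuclideanSpace ℝ (Fin k), lam (p + v) = L v + lam p := by
    intro v
    have := lam.map_vadd p v
    simpa [vadd_eq_add, add_comm] using this
  -- Lipschitz bound for infDist
  have hlip : ∀ a b : EuclideanSpace ℝ (Fin k),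
      |Metric.infDist a K - Metric.infDist b K| ≤ dist a b := by
    intro a b
    rw [abs_sub_le_iff]
    constructor
    · have := Metric.infDist_le_infDist_add_dist (x := a) (y := b) (s := K)
      linarith
    · have := Metric.infDist_le_infDist_add_dist (x := b) (y := a) (s := K)
      rw [dist_comm] at this
      linarith
  -- Bound (B): |L w| ≤ 1 + 2δ for unit vectors
  have hB : ∀ w : EuclideanSpace ℝ (Fin k), ‖w‖ = 1 → |L w| ≤ 1 + 2 * δ := by
    intro w hw
    have hmemA : p + r • w ∈ Metric.closedBall p r := by
      rw [Metric.mem_closedBall, dist_self_add_left, norm_smul, hw,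
        Real.norm_eq_abs, abs_of_pos hr]
      simp
    have hmemB : p + (-r) • w ∈ Metric.closedBall p r := by
      rw [Metric.mem_closedBall, dist_self_add_left, norm_smul, hw, mul_one,
        Real.norm_eq_abs, abs_neg, abs_of_pos hr]
    have h1 := hlam _ hmemA
    have h2 := hlam _ hmemB
    have hdist : dist (p + r • w) (p + (-r) • w) = 2 * r := by
      rw [dist_eq_norm]
      have : (p + r • w) - (p + (-r) • w) = (2 * r) • w := by module
      rw [this, norm_smul, hw, Real.norm_eq_abs, abs_of_pos (by linarith), mul_one]
    have hflip := hlip (p + r • w) (p + (-r) • w)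
    rw [hdist] at hflip
    have e1 : lam (p + r • w) = r * L w + lam p := by
      rw [hmap]; congr 1; exact L.map_smul r w
    have e2 : lam (p + (-r) • w) = -r * L w + lam p := by
      rw [hmap]; congr 1; exact L.map_smul (-r) w
    rw [abs_le] at h1 h2 hflip ⊢
    rw [e1] at h1
    rw [e2] at h2
    obtain ⟨h1a, h1b⟩ := h1
    obtain ⟨h2a, h2b⟩ := h2
    obtain ⟨h3a, h3b⟩ := hflip
    have hup : 2 * (r * L w) ≤ 2 * r + 2 * (δ * r) := by linarith
    have hlo : -(2 * r) - 2 * (δ * r) ≤ 2 * (r * L w) := by linarith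
    have hδr : 0 < δ * r := mul_pos hδ hr
    constructor
    · have h' : r * (-(1 + 2 * δ)) ≤ r * L w := by nlinarith [hlo, hδr]
      exact (mul_le_mul_iff_right₀ hr).mp h'
    · have h' : r * L w ≤ r * (1 + 2 * δ) := by nlinarith [hup, hδr]
      exact (mul_le_mul_iff_right₀ hr).mp h'
  -- Bound (A): L u_i ≤ -(1 - 2δ)
  have hA : ∀ z : EuclideanSpace ℝ (Fin k), z ∈ K → ‖z - p‖ = d →
      L (d⁻¹ • (z - p)) ≤ -(1 - 2 * δ) := by
    intro z hz hzp
    set u : EuclideanSpace ℝ (Fin k) := d⁻¹ • (z - p) with hudef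
    have hu : ‖u‖ = 1 := by
      rw [hudef, norm_smul, hzp, norm_inv, Real.norm_eq_abs, abs_of_pos hd0]
      field_simp
    have hmem : p + r • u ∈ Metric.closedBall p r := by
      rw [Metric.mem_closedBall, dist_self_add_left, norm_smul, hu,
        Real.norm_eq_abs, abs_of_pos hr]
      simp
    have hmemp : p ∈ Metric.closedBall p r := Metric.mem_closedBall_self (le_of_lt hr)
    have hfq : Metric.infDist (p + r • u) K ≤ d - r := by
      have hle := Metric.infDist_le_dist_of_mem (x := p + r • u) hz
      have heq : (p + r • u) - z = (r * d⁻¹ - 1) • (z - p) := by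
        rw [hudef]; module
      have : dist (p + r • u) z = d - r := by
        rw [dist_eq_norm, heq, norm_smul, hzp, Real.norm_eq_abs]
        have hrd1 : r * d⁻¹ < 1 := by
          rw [← div_eq_mul_inv, div_lt_one hd0]; exact hrd
        rw [abs_of_neg (by linarith)]
        field_simp
        ring
      linarith [this ▸ hle]
    have hfp : Metric.infDist p K = d := rfl
    have h1 := hlam _ hmem
    have h2 := hlam _ hmemp
    have e1 : lam (p + r • u) = r * L u + lam p := by
      rw [hmap]; congr 1; exact L.map_smul r u
    rw [abs_le] at h1 h2
    rw [e1] at h1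
    obtain ⟨h1a, h1b⟩ := h1
    obtain ⟨h2a, h2b⟩ := h2
    have key : r * L u ≤ -r + 2 * δ * r := by
      have : Metric.infDist p K = d := rfl
      linarith
    have h' : r * L u ≤ r * (-(1 - 2 * δ)) := by nlinarith [key]
    exact (mul_le_mul_iff_right₀ hr).mp h'
  have h1 : L u₁ ≤ -(1 - 2 * δ) := hA z₁ hz₁ hz₁p
  have h2 : L u₂ ≤ -(1 - 2 * δ) := hA z₂ hz₂ hz₂p
  have hsum : L (u₁ + u₂) ≤ -2 * (1 - 2 * δ) := by
    rw [map_add]; linarith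
  have hne0 : u₁ + u₂ ≠ 0 := by
    intro h
    rw [h, map_zero] at hsum
    linarith
  set s := ‖u₁ + u₂‖ with hsdef
  have hs0 : 0 < s := norm_pos_iff.mpr hne0
  have hwunit : ‖s⁻¹ • (u₁ + u₂)‖ = 1 := by
    rw [norm_smul, norm_inv, Real.norm_eq_abs, abs_of_pos hs0, ← hsdef]
    field_simp
  have hBw := hB _ hwunit
  have hLw : L (s⁻¹ • (u₁ + u₂)) = s⁻¹ * L (u₁ + u₂) := L.map_smul s⁻¹ (u₁ + u₂)
  rw [hLw, abs_le] at hBw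
  obtain ⟨hBw1, hBw2⟩ := hBw
  -- s ≥ 2(1-2δ)/(1+2δ)
  have hskey : 2 * (1 - 2 * δ) ≤ (1 + 2 * δ) * s := by
    have := mul_le_mul_of_nonneg_left hBw1 (le_of_lt hs0)
    have hsi : s * (s⁻¹ * L (u₁ + u₂)) = L (u₁ + u₂) := by
      field_simp
    nlinarith [hsi]
  set t : ℝ := inner ℝ u₁ u₂ with htdef
  have hs2 : s ^ 2 = 2 + 2 * t := by
    rw [hsdef, norm_add_sq_real, hu₁, hu₂, htdef]
    ring
  set c := (1 - 2 * δ) / (1 + 2 * δ) with hcdef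
  have hc : c * (1 + 2 * δ) = 1 - 2 * δ := by
    rw [hcdef]; field_simp
  have ht : 2 * c ^ 2 - 1 ≤ t := by
    have h2c : 2 * c ≤ s := by
      nlinarith [hc, hskey]
    have hc0 : 0 ≤ c := by
      apply div_nonneg <;> linarith
    nlinarith [hs2, h2c, hc0, hs0]
  -- angle computation
  have hθeq : InnerProductGeometry.angle (z₁ - p) (z₂ - p) = Real.arccos t := by
    rw [InnerProductGeometry.angle, hz₁p, hz₂p, htdef, hu₁def, hu₂def,
      real_inner_smul_left, real_inner_smul_right]
    congr 1
    field_simp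
  have harc : Real.arccos t ≤ Real.arccos (2 * c ^ 2 - 1) := by
    rw [Real.arccos_eq_pi_div_two_sub_arcsin, Real.arccos_eq_pi_div_two_sub_arcsin]
    have := Real.monotone_arcsin ht
    linarith
  rw [hθeq] at hangle
  rw [hcdef] at harc
  linarith
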